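/- With E, 𝓔 as above and additionally the constraint η_R + (K²/(4R³)) e^{2η} = a R E, define E_K = E + (K²/(4R⁴)) a^{-1} e^{2η} and 𝓔_K(R) = ∫_{S¹} E_K dθ. Then d𝓔_K/dR = −(K²/R⁵) ∫_{S¹} a^{-1} e^{2η} dθ − (2/R) ∫_{S¹} a^{-1} U_R² dθ, so 𝓔_K is non-increasing and ∫_{R₀}^∞ (K²/R⁵) ∫_{S¹} e^{2η} a^{-1} dθ dR ≤ 𝓔_K(R₀). -/

import Mathlib

open Real MeasureTheory intervalIntegral
set_option maxHeartbeats 1000000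

abbrev unc (f : ℝ → ℝ → ℝ) : ℝ × ℝ → ℝ := fun p => f p.1 p.2

noncomputable def P1 (f : ℝ × ℝ → ℝ) (p : ℝ × ℝ) : ℝ := fderiv ℝ f p (1, 0)
noncomputable def P2 (f : ℝ × ℝ → ℝ) (p : ℝ × ℝ) : ℝ := fderiv ℝ f p (0, 1)

lemma P1_hasDerivAt {f : ℝ × ℝ → ℝ} {p : ℝ × ℝ} (h : DifferentiableAt ℝ f p) :
    HasDerivAt (fun r => f (r, p.2)) (P1 f p) p.1 := by
  have h1 : HasDerivAt (fun r : ℝ => (r, p.2)) ((1:ℝ), (0:ℝ)) p.1 :=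
    (hasDerivAt_id p.1).prodMk (hasDerivAt_const p.1 p.2)
  simpa [P1, Function.comp_def] using h.hasFDerivAt.comp_hasDerivAt p.1 h1

lemma P2_hasDerivAt {f : ℝ × ℝ → ℝ} {p : ℝ × ℝ} (h : DifferentiableAt ℝ f p) :
    HasDerivAt (fun t => f (p.1, t)) (P2 f p) p.2 := by
  have h1 : HasDerivAt (fun t : ℝ => (p.1, t)) ((0:ℝ), (1:ℝ)) p.2 :=
    (hasDerivAt_const p.2 p.1).prodMk (hasDerivAt_id p.2)
  simpa [P2, Function.comp_def] using h.hasFDerivAt.comp_hasDerivAt p.2 h1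

lemma tople : ((⊤:ℕ∞) : WithTop ℕ∞) + 1 ≤ ((⊤:ℕ∞) : WithTop ℕ∞) := by simp

lemma onele : ((⊤:ℕ∞) : WithTop ℕ∞) ≠ 0 := by simp

lemma P1_contDiff {f : ℝ×ℝ → ℝ} (h : ContDiff ℝ (⊤:ℕ∞) f) : ContDiff ℝ (⊤:ℕ∞) (P1 f) :=
  (h.fderiv_right tople).clm_apply contDiff_const

lemma P2_contDiff {f : ℝ×ℝ → ℝ} (h : ContDiff ℝ (⊤:ℕ∞) f) : ContDiff ℝ (⊤:ℕ∞) (P2 f) :=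
  (h.fderiv_right tople).clm_apply contDiff_const

lemma P_symm {f : ℝ×ℝ → ℝ} (h : ContDiff ℝ (⊤:ℕ∞) f) (p : ℝ×ℝ) :
    P1 (P2 f) p = P2 (P1 f) p := by
  have hd : DifferentiableAt ℝ (fderiv ℝ f) p :=
    ((h.fderiv_right tople).differentiable onele).differentiableAt
  have h1 : P1 (P2 f) p = fderiv ℝ (fderiv ℝ f) p (1,0) (0,1) := by
    unfold P1 P2
    rw [fderiv_clm_apply hd (differentiableAt_const _)]
    simp
  have h2 : P2 (P1 f) p = fderiv ℝ (fderiv ℝ f) p (0,1) (1,0) := by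
    unfold P1 P2
    rw [fderiv_clm_apply hd (differentiableAt_const _)]
    simp
  rw [h1, h2]
  exact (h.contDiffAt.isSymmSndFDerivAt (by rw [minSmoothness_of_isRCLikeNormedField]; exact WithTop.coe_le_coe.mpr (le_top : (2:ℕ∞) ≤ ⊤))).eq _ _

lemma periodic_deriv_eq {f : ℝ → ℝ} {c : ℝ} (h : Function.Periodic f c) (x : ℝ) :
    deriv f (x + c) = deriv f x := by
  have hfc : (fun y => f (y + c)) = f := funext h
  calc deriv f (x + c) = deriv (fun y => f (y + c)) x := (deriv_comp_add_const _ _ _).symm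
  _ = deriv f x := by rw [hfc]

lemma cont_param {Φ : ℝ × ℝ → ℝ} (hΦ : Continuous Φ) {b : ℝ} (hb : 0 ≤ b) :
    Continuous fun x => ∫ t in (0:ℝ)..b, Φ (x, t) := by
  have h := continuous_parametric_integral_of_continuous
    (μ := (volume : Measure ℝ)) (f := fun x t => Φ (x, t)) (by exact hΦ)
    (isCompact_Icc (a := (0:ℝ)) (b := b))
  have heq : ∀ x : ℝ, ∫ t in (0:ℝ)..b, Φ (x, t) = ∫ t in Set.Icc (0:ℝ) b, Φ (x, t) := fun x => by
    rw [intervalIntegral.integral_of_le hb, ← MeasureTheory.integral_Icc_eq_integral_Ioc]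
  simpa only [heq] using h

noncomputable def Gfun (K : ℝ) (U a η : ℝ → ℝ → ℝ) (p : ℝ × ℝ) : ℝ :=
  (unc a p)⁻¹ * P1 (unc U) p ^ 2 + unc a p * P2 (unc U) p ^ 2
    + K ^ 2 / 4 * ((p.1 ^ 4)⁻¹ * ((unc a p)⁻¹ * Real.exp (2 * unc η p)))

noncomputable def Dfun (K : ℝ) (U a η : ℝ → ℝ → ℝ) (p : ℝ × ℝ) : ℝ :=
  -P1 (unc a) p / unc a p ^ 2 * P1 (unc U) p ^ 2
    + (unc a p)⁻¹ * (2 * P1 (unc U) p * P1 (P1 (unc U)) p)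
    + (P1 (unc a) p * P2 (unc U) p ^ 2 + unc a p * (2 * P2 (unc U) p * P1 (P2 (unc U)) p))
    + K ^ 2 / 4 *
      (-(4 * p.1 ^ 3) / (p.1 ^ 4) ^ 2 * ((unc a p)⁻¹ * Real.exp (2 * unc η p))
        + (p.1 ^ 4)⁻¹ *
          (-P1 (unc a) p / unc a p ^ 2 * Real.exp (2 * unc η p)
            + (unc a p)⁻¹ * (Real.exp (2 * unc η p) * (2 * P1 (unc η) p))))

noncomputable def Psi (U a : ℝ → ℝ → ℝ) (p : ℝ × ℝ) : ℝ :=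
  (P2 (unc a) p * P2 (unc U) p + unc a p * P2 (P2 (unc U)) p) * P1 (unc U) p
    + unc a p * P2 (unc U) p * P2 (P1 (unc U)) p

section
variable {K : ℝ} {U a η : ℝ → ℝ → ℝ}
  (hU : ContDiff ℝ (⊤:ℕ∞) (unc U)) (ha : ContDiff ℝ (⊤:ℕ∞) (unc a))
  (hη : ContDiff ℝ (⊤:ℕ∞) (unc η)) (hapos : ∀ p, 0 < unc a p)

include hU ha hη hapos in
lemma hasDerivAt_G {x t : ℝ} (hx : x ≠ 0) :
    HasDerivAt (fun r => Gfun K U a η (r, t)) (Dfun K U a η (x, t)) x := by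
  have hane : unc a (x, t) ≠ 0 := ne_of_gt (hapos _)
  have hA : HasDerivAt (fun r => unc a (r, t)) (P1 (unc a) (x, t)) x :=
    P1_hasDerivAt (p := (x, t)) ((ha.differentiable onele).differentiableAt)
  have hH : HasDerivAt (fun r => unc η (r, t)) (P1 (unc η) (x, t)) x :=
    P1_hasDerivAt (p := (x, t)) ((hη.differentiable onele).differentiableAt)
  have hV : HasDerivAt (fun r => P1 (unc U) (r, t)) (P1 (P1 (unc U)) (x, t)) x :=
    P1_hasDerivAt (p := (x, t)) (((P1_contDiff hU).differentiable onele).differentiableAt)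
  have hW : HasDerivAt (fun r => P2 (unc U) (r, t)) (P1 (P2 (unc U)) (x, t)) x :=
    P1_hasDerivAt (p := (x, t)) (((P2_contDiff hU).differentiable onele).differentiableAt)
  have hAinv := hA.inv hane
  have hexp : HasDerivAt (fun r => Real.exp (2 * unc η (r, t)))
      (Real.exp (2 * unc η (x, t)) * (2 * P1 (unc η) (x, t))) x := (hH.const_mul 2).exp
  have hpow : HasDerivAt (fun r : ℝ => (r ^ 4)⁻¹) (-(↑(4:ℕ) * x ^ 3) / (x ^ 4) ^ 2) x :=
    (hasDerivAt_pow 4 x).inv (pow_ne_zero 4 hx)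
  have h1 := hAinv.mul (hV.pow 2)
  have h2 := hA.mul (hW.pow 2)
  have h3 := hAinv.mul hexp
  have h4 := hpow.mul h3
  have h5 := h4.const_mul (K ^ 2 / 4)
  have htot := (h1.add h2).add h5
  refine htot.congr_deriv ?_
  simp only [Dfun, Pi.pow_apply, Pi.inv_apply, Pi.mul_apply]
  push_cast
  ring

include hU ha hη hapos in
lemma contOn_D : ContinuousOn (Dfun K U a η) {p : ℝ × ℝ | p.1 ≠ 0} := by
  have hca : Continuous (unc a) := ha.continuous
  have hane : ∀ p, unc a p ≠ 0 := fun p => ne_of_gt (hapos p)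
  have hcV : Continuous (P1 (unc U)) := (P1_contDiff hU).continuous
  have hcW : Continuous (P2 (unc U)) := (P2_contDiff hU).continuous
  have hcV1 : Continuous (P1 (P1 (unc U))) := (P1_contDiff (P1_contDiff hU)).continuous
  have hcW1 : Continuous (P1 (P2 (unc U))) := (P1_contDiff (P2_contDiff hU)).continuous
  have hcA1 : Continuous (P1 (unc a)) := (P1_contDiff ha).continuous
  have hcH1 : Continuous (P1 (unc η)) := (P1_contDiff hη).continuous
  have hcE : Continuous (fun p => Real.exp (2 * unc η p)) :=
    Real.continuous_exp.comp (continuous_const.mul hη.continuous)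
  have hc1 : Continuous (fun p => -P1 (unc a) p / unc a p ^ 2 * P1 (unc U) p ^ 2
      + (unc a p)⁻¹ * (2 * P1 (unc U) p * P1 (P1 (unc U)) p)
      + (P1 (unc a) p * P2 (unc U) p ^ 2 + unc a p * (2 * P2 (unc U) p * P1 (P2 (unc U)) p))) := by
    refine Continuous.add (Continuous.add ?_ ?_) ?_
    · exact (hcA1.neg.div (hca.pow 2) (fun p => pow_ne_zero 2 (hane p))).mul (hcV.pow 2)
    · exact (hca.inv₀ hane).mul ((continuous_const.mul hcV).mul hcV1)
    · exact (hcA1.mul (hcW.pow 2)).add (hca.mul ((continuous_const.mul hcW).mul hcW1))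
  have hbad1 : ContinuousOn (fun p : ℝ × ℝ => -(4 * p.1 ^ 3) / (p.1 ^ 4) ^ 2) {p | p.1 ≠ 0} :=
    ContinuousOn.div (by fun_prop) (by fun_prop)
      (fun p hp => pow_ne_zero 2 (pow_ne_zero 4 hp))
  have hbad2 : ContinuousOn (fun p : ℝ × ℝ => (p.1 ^ 4)⁻¹) {p : ℝ × ℝ | p.1 ≠ 0} :=
    ContinuousOn.inv₀ (by fun_prop) (fun p hp => pow_ne_zero 4 hp)
  have hc3 : Continuous (fun p => -P1 (unc a) p / unc a p ^ 2 * Real.exp (2 * unc η p)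
      + (unc a p)⁻¹ * (Real.exp (2 * unc η p) * (2 * P1 (unc η) p))) := by
    refine Continuous.add ?_ ?_
    · exact (hcA1.neg.div (hca.pow 2) (fun p => pow_ne_zero 2 (hane p))).mul hcE
    · exact (hca.inv₀ hane).mul (hcE.mul (continuous_const.mul hcH1))
  have hcE2 : Continuous (fun p => (unc a p)⁻¹ * Real.exp (2 * unc η p)) :=
    (hca.inv₀ hane).mul hcE
  exact (hc1.continuousOn.add (continuousOn_const.mul
    ((hbad1.mul hcE2.continuousOn).add (hbad2.mul hc3.continuousOn))))

include hU ha hη hapos in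
lemma contG_slice (y : ℝ) : Continuous fun t => Gfun K U a η (y, t) := by
  have hl : Continuous (fun t : ℝ => ((y, t) : ℝ × ℝ)) := continuous_const.prodMk continuous_id
  have hca : Continuous (unc a) := ha.continuous
  have haneg : ∀ t : ℝ, unc a (y, t) ≠ 0 := fun t => ne_of_gt (hapos _)
  have hca' : Continuous (fun t : ℝ => unc a (y, t)) := hca.comp hl
  have hcV' : Continuous (fun t : ℝ => P1 (unc U) (y, t)) := (P1_contDiff hU).continuous.comp hl
  have hcW' : Continuous (fun t : ℝ => P2 (unc U) (y, t)) := (P2_contDiff hU).continuous.comp hl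
  have hcE : Continuous (fun t : ℝ => Real.exp (2 * unc η (y, t))) :=
    Real.continuous_exp.comp (continuous_const.mul (hη.continuous.comp hl))
  show Continuous fun t : ℝ => (unc a (y, t))⁻¹ * P1 (unc U) (y, t) ^ 2
    + unc a (y, t) * P2 (unc U) (y, t) ^ 2
    + K ^ 2 / 4 * (((y : ℝ) ^ 4)⁻¹ * ((unc a (y, t))⁻¹ * Real.exp (2 * unc η (y, t))))
  refine Continuous.add (Continuous.add ?_ ?_) ?_
  · exact ((hca'.inv₀ haneg).mul (hcV'.pow 2))
  · exact hca'.mul (hcW'.pow 2)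
  · exact continuous_const.mul (continuous_const.mul ((hca'.inv₀ haneg).mul hcE))

include hU ha hη hapos in
lemma hasDerivAt_int {x : ℝ} (hx : 0 < x) :
    HasDerivAt (fun r => ∫ t in (0:ℝ)..(2 * π), Gfun K U a η (r, t))
      (∫ t in (0:ℝ)..(2 * π), Dfun K U a η (x, t)) x := by
  have h2pi : (0:ℝ) ≤ 2 * π := by positivity
  have hScpt : IsCompact ((Set.Icc (x/2) (x + x/2)) ×ˢ (Set.Icc (0:ℝ) (2*π))) :=
    isCompact_Icc.prod isCompact_Icc
  have hSsub : ((Set.Icc (x/2) (x + x/2)) ×ˢ (Set.Icc (0:ℝ) (2*π))) ⊆ {p : ℝ × ℝ | p.1 ≠ 0} :=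
    fun p hp => ne_of_gt (lt_of_lt_of_le (half_pos hx) hp.1.1)
  obtain ⟨C, hC⟩ := hScpt.exists_bound_of_continuousOn ((contOn_D hU ha hη hapos).mono hSsub)
  have hball : ∀ y ∈ Metric.ball x (x/2), y ∈ Set.Icc (x/2) (x + x/2) := by
    intro y hy
    rw [Metric.mem_ball, Real.dist_eq, abs_lt] at hy
    constructor <;> linarith [hy.1, hy.2]
  have hmem : ∀ t ∈ Set.uIoc (0:ℝ) (2*π), t ∈ Set.Icc (0:ℝ) (2*π) := by
    intro t ht
    rw [Set.uIoc_of_le h2pi] at ht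
    exact Set.Ioc_subset_Icc_self ht
  refine (intervalIntegral.hasDerivAt_integral_of_dominated_loc_of_deriv_le
    (F := fun y t => Gfun K U a η (y, t)) (F' := fun y t => Dfun K U a η (y, t))
    (bound := fun _ => C) (Metric.ball_mem_nhds x (half_pos hx)) ?_ ?_ ?_ ?_ ?_ ?_).2
  · exact Filter.Eventually.of_forall fun y => (contG_slice hU ha hη hapos y).aestronglyMeasurable
  · exact (contG_slice hU ha hη hapos x).intervalIntegrable 0 (2*π)
  · have : Continuous fun t => Dfun K U a η (x, t) :=
      (contOn_D hU ha hη hapos).comp_continuous (continuous_const.prodMk continuous_id)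
        (fun t => ne_of_gt hx)
    exact this.aestronglyMeasurable
  · exact Filter.Eventually.of_forall fun t ht y hy => hC _ ⟨hball y hy, hmem t ht⟩
  · exact intervalIntegrable_const
  · exact Filter.Eventually.of_forall fun t ht y hy =>
      hasDerivAt_G hU ha hη hapos
        (ne_of_gt (lt_of_lt_of_le (half_pos hx) (hball y hy).1))

end

/-- Identity and monotonicity for the modified energy
`𝓔_K(R) = ∫_{S¹} (E + (K²/(4R⁴)) a⁻¹ e^{2η}) dθ`:
`d𝓔_K/dR = −(K²/R⁵) ∫ a⁻¹ e^{2η} − (2/R) ∫ a⁻¹ U_R²`, so `𝓔_K` is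
non-increasing and the spacetime integral `∫_{R₀}^∞ (K²/R⁵) ∫ e^{2η} a⁻¹`
is bounded by `𝓔_K(R₀)`. -/
theorem modified_energy_identity
    (K R₀ : ℝ) (hR₀ : 0 < R₀)
    (U a η : ℝ → ℝ → ℝ)
    (hU : ContDiff ℝ (⊤ : ℕ∞) (fun p : ℝ × ℝ => U p.1 p.2))
    (ha : ContDiff ℝ (⊤ : ℕ∞) (fun p : ℝ × ℝ => a p.1 p.2))
    (hη : ContDiff ℝ (⊤ : ℕ∞) (fun p : ℝ × ℝ => η p.1 p.2))
    (hapos : ∀ R θ, 0 < a R θ)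
    (hUper : ∀ R, Function.Periodic (U R) (2 * π))
    (haper : ∀ R, Function.Periodic (a R) (2 * π))
    (hηper : ∀ R, Function.Periodic (η R) (2 * π))
    (hwave : ∀ R ∈ Set.Ici R₀, ∀ θ,
      deriv (fun r => r * (a r θ)⁻¹ * deriv (fun r' => U r' θ) r) R
        = deriv (fun t => R * a R t * deriv (U R) t) θ)
    (haeq : ∀ R ∈ Set.Ici R₀, ∀ θ,
      deriv (fun r => 2 * Real.log (a r θ)) R = -(K ^ 2 / R ^ 3) * Real.exp (2 * η R θ))
    (E : ℝ → ℝ → ℝ)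
    (hE : ∀ R θ, E R θ
      = (a R θ)⁻¹ * (deriv (fun r => U r θ) R) ^ 2 + a R θ * (deriv (U R) θ) ^ 2)
    (hηR : ∀ R ∈ Set.Ici R₀, ∀ θ,
      deriv (fun r => η r θ) R + K ^ 2 / (4 * R ^ 3) * Real.exp (2 * η R θ)
        = a R θ * R * E R θ)
    (hηθ : ∀ R ∈ Set.Ici R₀, ∀ θ,
      deriv (η R) θ = 2 * R * deriv (fun r => U r θ) R * deriv (U R) θ)
    (EK : ℝ → ℝ → ℝ)
    (hEK : ∀ R θ, EK R θ
      = E R θ + K ^ 2 / (4 * R ^ 4) * (a R θ)⁻¹ * Real.exp (2 * η R θ))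
    (𝓔K : ℝ → ℝ) (h𝓔K : ∀ R, 𝓔K R = ∫ θ in (0:ℝ)..(2 * π), EK R θ) :
    (∀ R ∈ Set.Ici R₀,
      deriv 𝓔K R
        = -(K ^ 2 / R ^ 5) * (∫ θ in (0:ℝ)..(2 * π), (a R θ)⁻¹ * Real.exp (2 * η R θ))
          - (2 / R) * ∫ θ in (0:ℝ)..(2 * π), (a R θ)⁻¹ * (deriv (fun r => U r θ) R) ^ 2)
    ∧ AntitoneOn 𝓔K (Set.Ici R₀)
    ∧ ∀ R ∈ Set.Ici R₀,
        (∫ r in R₀..R, K ^ 2 / r ^ 5 *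
          ∫ θ in (0:ℝ)..(2 * π), Real.exp (2 * η r θ) * (a r θ)⁻¹) ≤ 𝓔K R₀ := by
  have hUc : ContDiff ℝ (⊤:ℕ∞) (unc U) := hU
  have hac : ContDiff ℝ (⊤:ℕ∞) (unc a) := ha
  have hηc : ContDiff ℝ (⊤:ℕ∞) (unc η) := hη
  have hap : ∀ p : ℝ × ℝ, 0 < unc a p := fun p => hapos p.1 p.2
  have h2pi : (0:ℝ) ≤ 2 * π := by positivity
  have dU : ∀ p : ℝ×ℝ, DifferentiableAt ℝ (unc U) p :=
    fun p => (hUc.differentiable onele).differentiableAt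
  have da : ∀ p : ℝ×ℝ, DifferentiableAt ℝ (unc a) p :=
    fun p => (hac.differentiable onele).differentiableAt
  have dη : ∀ p : ℝ×ℝ, DifferentiableAt ℝ (unc η) p :=
    fun p => (hηc.differentiable onele).differentiableAt
  have dV : ∀ p : ℝ×ℝ, DifferentiableAt ℝ (P1 (unc U)) p :=
    fun p => ((P1_contDiff hUc).differentiable onele).differentiableAt
  have dW : ∀ p : ℝ×ℝ, DifferentiableAt ℝ (P2 (unc U)) p :=
    fun p => ((P2_contDiff hUc).differentiable onele).differentiableAt
  have cV : ∀ (r θ' : ℝ), deriv (fun r' => U r' θ') r = P1 (unc U) (r, θ') :=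
    fun r θ' => (P1_hasDerivAt (p := (r, θ')) (dU (r, θ')) :
      HasDerivAt (fun r' => U r' θ') _ r).deriv
  have cW : ∀ (r θ' : ℝ), deriv (U r) θ' = P2 (unc U) (r, θ') :=
    fun r θ' => (P2_hasDerivAt (p := (r, θ')) (dU (r, θ')) :
      HasDerivAt (fun t => U r t) _ θ').deriv
  -- pointwise identity
  have hpoint : ∀ R ∈ Set.Ici R₀, ∀ θ : ℝ, Dfun K U a η (R, θ) =
      (-(K ^ 2 / R ^ 5) * ((a R θ)⁻¹ * Real.exp (2 * η R θ))
        - 2 / R * ((a R θ)⁻¹ * P1 (unc U) (R, θ) ^ 2)) + 2 * Psi U a (R, θ) := by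
    intro R hRm θ
    have hRpos : 0 < R := lt_of_lt_of_le hR₀ hRm
    have hRne : R ≠ 0 := ne_of_gt hRpos
    have hane : a R θ ≠ 0 := ne_of_gt (hapos R θ)
    have hA : HasDerivAt (fun r => a r θ) (P1 (unc a) (R, θ)) R :=
      P1_hasDerivAt (p := (R, θ)) (da (R, θ))
    have hH : HasDerivAt (fun r => η r θ) (P1 (unc η) (R, θ)) R :=
      P1_hasDerivAt (p := (R, θ)) (dη (R, θ))
    have hVsl : HasDerivAt (fun r => P1 (unc U) (r, θ)) (P1 (P1 (unc U)) (R, θ)) R :=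
      P1_hasDerivAt (p := (R, θ)) (dV (R, θ))
    have hlog : HasDerivAt (fun r => 2 * Real.log (a r θ))
        (2 * (P1 (unc a) (R, θ) / a R θ)) R := (hA.log hane).const_mul 2
    have e1 : 2 * (P1 (unc a) (R, θ) / a R θ) = -(K ^ 2 / R ^ 3) * Real.exp (2 * η R θ) := by
      rw [← hlog.deriv]; exact haeq R hRm θ
    have hA1eq : P1 (unc a) (R, θ)
        = -(K ^ 2 / (2 * R ^ 3)) * a R θ * Real.exp (2 * η R θ) := by
      field_simp at e1 ⊢
      linarith [e1]
    have e2 := hηR R hRm θ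
    rw [hE R θ] at e2
    simp only [cV, cW] at e2
    rw [hH.deriv] at e2
    have hH1eq : P1 (unc η) (R, θ) = a R θ * R * ((a R θ)⁻¹ * P1 (unc U) (R, θ) ^ 2
        + a R θ * P2 (unc U) (R, θ) ^ 2) - K ^ 2 / (4 * R ^ 3) * Real.exp (2 * η R θ) := by
      linarith [e2]
    have ew := hwave R hRm θ
    simp only [cV, cW] at ew
    have hLder : HasDerivAt (fun r => r * (a r θ)⁻¹ * P1 (unc U) (r, θ))
        ((1 * (a R θ)⁻¹ + R * (-P1 (unc a) (R, θ) / a R θ ^ 2)) * P1 (unc U) (R, θ)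
          + R * (a R θ)⁻¹ * P1 (P1 (unc U)) (R, θ)) R :=
      ((hasDerivAt_id R).mul (hA.inv hane)).mul hVsl
    have hA2sl : HasDerivAt (fun t => a R t) (P2 (unc a) (R, θ)) θ :=
      P2_hasDerivAt (p := (R, θ)) (da (R, θ))
    have hW2sl : HasDerivAt (fun t => P2 (unc U) (R, t)) (P2 (P2 (unc U)) (R, θ)) θ :=
      P2_hasDerivAt (p := (R, θ)) (dW (R, θ))
    have hRder : HasDerivAt (fun t => R * a R t * P2 (unc U) (R, t))
        ((0 * a R θ + R * P2 (unc a) (R, θ)) * P2 (unc U) (R, θ)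
          + R * a R θ * P2 (P2 (unc U)) (R, θ)) θ :=
      ((hasDerivAt_const θ R).mul hA2sl).mul hW2sl
    rw [hLder.deriv, hRder.deriv] at ew
    have hV1eq : P1 (P1 (unc U)) (R, θ) =
        ((0 * a R θ + R * P2 (unc a) (R, θ)) * P2 (unc U) (R, θ)
          + R * a R θ * P2 (P2 (unc U)) (R, θ)
          - (1 * (a R θ)⁻¹ + R * (-P1 (unc a) (R, θ) / a R θ ^ 2)) * P1 (unc U) (R, θ))
          * a R θ / R := by
      rw [← ew]
      field_simp
      ring
    have hsymE : P1 (P2 (unc U)) (R, θ) = P2 (P1 (unc U)) (R, θ) := P_symm hUc (R, θ)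
    have hD : Dfun K U a η (R, θ) =
        -P1 (unc a) (R, θ) / a R θ ^ 2 * P1 (unc U) (R, θ) ^ 2
        + (a R θ)⁻¹ * (2 * P1 (unc U) (R, θ) * P1 (P1 (unc U)) (R, θ))
        + (P1 (unc a) (R, θ) * P2 (unc U) (R, θ) ^ 2
            + a R θ * (2 * P2 (unc U) (R, θ) * P1 (P2 (unc U)) (R, θ)))
        + K ^ 2 / 4 *
          (-(4 * R ^ 3) / (R ^ 4) ^ 2 * ((a R θ)⁻¹ * Real.exp (2 * η R θ))
            + (R ^ 4)⁻¹ *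
              (-P1 (unc a) (R, θ) / a R θ ^ 2 * Real.exp (2 * η R θ)
                + (a R θ)⁻¹ * (Real.exp (2 * η R θ) * (2 * P1 (unc η) (R, θ))))) := rfl
    have hPsiD : Psi U a (R, θ) =
        (P2 (unc a) (R, θ) * P2 (unc U) (R, θ) + a R θ * P2 (P2 (unc U)) (R, θ))
            * P1 (unc U) (R, θ)
          + a R θ * P2 (unc U) (R, θ) * P2 (P1 (unc U)) (R, θ) := rfl
    rw [hD, hPsiD, hsymE, hV1eq, hA1eq, hH1eq]
    field_simp
    ring
  -- continuity of Psi and flux integral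
  have hPsiCont : Continuous (Psi U a) := by
    show Continuous fun p => (P2 (unc a) p * P2 (unc U) p + unc a p * P2 (P2 (unc U)) p)
        * P1 (unc U) p + unc a p * P2 (unc U) p * P2 (P1 (unc U)) p
    exact ((((P2_contDiff hac).continuous.mul (P2_contDiff hUc).continuous).add
      (hac.continuous.mul (P2_contDiff (P2_contDiff hUc)).continuous)).mul
        (P1_contDiff hUc).continuous).add
      ((hac.continuous.mul (P2_contDiff hUc).continuous).mul
        (P2_contDiff (P1_contDiff hUc)).continuous)
  have hline : ∀ r : ℝ, Continuous (fun t : ℝ => ((r, t) : ℝ × ℝ)) :=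
    fun r => continuous_const.prodMk continuous_id
  have hPsic : ∀ r : ℝ, Continuous fun θ' => Psi U a (r, θ') :=
    fun r => hPsiCont.comp (hline r)
  have hflux : ∀ R : ℝ, (∫ t in (0:ℝ)..(2 * π), Psi U a (R, t)) = 0 := by
    intro R
    have hfd : ∀ t : ℝ, HasDerivAt
        (fun t' => a R t' * P2 (unc U) (R, t') * P1 (unc U) (R, t')) (Psi U a (R, t)) t :=
      fun t => ((P2_hasDerivAt (p := (R, t)) (da (R, t))).mul
        (P2_hasDerivAt (p := (R, t)) (dW (R, t)))).mul
        (P2_hasDerivAt (p := (R, t)) (dV (R, t)))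
    have hint : IntervalIntegrable (fun t => Psi U a (R, t)) volume 0 (2 * π) :=
      (hPsic R).intervalIntegrable 0 (2 * π)
    rw [intervalIntegral.integral_eq_sub_of_hasDerivAt (fun t _ => hfd t) hint]
    have ha2 : a R (2 * π) = a R 0 := by have := haper R 0; rwa [zero_add] at this
    have hW2 : P2 (unc U) (R, 2 * π) = P2 (unc U) (R, 0) := by
      rw [← cW, ← cW]
      have := periodic_deriv_eq (hUper R) 0
      rwa [zero_add] at this
    have hV2 : P1 (unc U) (R, 2 * π) = P1 (unc U) (R, 0) := by
      rw [← cV, ← cV]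
      have hfe : (fun r => U r (2 * π)) = fun r => U r 0 := funext fun r => by
        have := hUper r 0; rwa [zero_add] at this
      rw [hfe]
    simp only [ha2, hW2, hV2]
    ring
  -- 𝓔K as integral of Gfun
  have hEKG : ∀ (r θ' : ℝ), EK r θ' = Gfun K U a η (r, θ') := by
    intro r θ'
    rw [hEK, hE, cV, cW]
    show _ = (a r θ')⁻¹ * P1 (unc U) (r, θ') ^ 2 + a r θ' * P2 (unc U) (r, θ') ^ 2
      + K ^ 2 / 4 * (((r : ℝ) ^ 4)⁻¹ * ((a r θ')⁻¹ * Real.exp (2 * η r θ')))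
    ring
  have h𝓔G : 𝓔K = fun r => ∫ t in (0:ℝ)..(2 * π), Gfun K U a η (r, t) := by
    funext r
    rw [h𝓔K]
    exact intervalIntegral.integral_congr (fun θ' _ => hEKG r θ')
  have hder : ∀ r : ℝ, 0 < r →
      HasDerivAt 𝓔K (∫ t in (0:ℝ)..(2 * π), Dfun K U a η (r, t)) r := by
    intro r hr
    rw [h𝓔G]
    exact hasDerivAt_int hUc hac hηc hap hr
  -- slice continuities
  have hf1c : ∀ r : ℝ, Continuous fun θ' => (a r θ')⁻¹ * Real.exp (2 * η r θ') := by
    intro r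
    have h1 : Continuous (fun θ' => a r θ') := hac.continuous.comp (hline r)
    have h2 : Continuous (fun θ' => Real.exp (2 * η r θ')) :=
      Real.continuous_exp.comp (continuous_const.mul (hηc.continuous.comp (hline r)))
    exact (h1.inv₀ (fun t => ne_of_gt (hapos r t))).mul h2
  have hf2c : ∀ r : ℝ, Continuous fun θ' => (a r θ')⁻¹ * P1 (unc U) (r, θ') ^ 2 := by
    intro r
    have h1 : Continuous (fun θ' => a r θ') := hac.continuous.comp (hline r)
    exact (h1.inv₀ (fun t => ne_of_gt (hapos r t))).mul
      (((P1_contDiff hUc).continuous.comp (hline r)).pow 2)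
  -- Part 1
  have part1 : ∀ R ∈ Set.Ici R₀, deriv 𝓔K R
      = -(K ^ 2 / R ^ 5) * (∫ θ in (0:ℝ)..(2 * π), (a R θ)⁻¹ * Real.exp (2 * η R θ))
        - (2 / R) * ∫ θ in (0:ℝ)..(2 * π), (a R θ)⁻¹ * (deriv (fun r => U r θ) R) ^ 2 := by
    intro R hRm
    have hRpos : 0 < R := lt_of_lt_of_le hR₀ hRm
    rw [(hder R hRpos).deriv]
    simp only [cV]
    have hint1 : IntervalIntegrable
        (fun θ' => -(K ^ 2 / R ^ 5) * ((a R θ')⁻¹ * Real.exp (2 * η R θ'))) volume 0 (2 * π) :=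
      (continuous_const.mul (hf1c R)).intervalIntegrable 0 (2 * π)
    have hint2 : IntervalIntegrable
        (fun θ' => 2 / R * ((a R θ')⁻¹ * P1 (unc U) (R, θ') ^ 2)) volume 0 (2 * π) :=
      (continuous_const.mul (hf2c R)).intervalIntegrable 0 (2 * π)
    have hintPsi : IntervalIntegrable (fun θ' => 2 * Psi U a (R, θ')) volume 0 (2 * π) :=
      (continuous_const.mul (hPsic R)).intervalIntegrable 0 (2 * π)
    rw [intervalIntegral.integral_congr (g := fun θ' =>
        (-(K ^ 2 / R ^ 5) * ((a R θ')⁻¹ * Real.exp (2 * η R θ'))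
          - 2 / R * ((a R θ')⁻¹ * P1 (unc U) (R, θ') ^ 2)) + 2 * Psi U a (R, θ'))
      (fun θ' _ => hpoint R hRm θ')]
    rw [intervalIntegral.integral_add (hint1.sub hint2) hintPsi,
      intervalIntegral.integral_sub hint1 hint2,
      intervalIntegral.integral_const_mul, intervalIntegral.integral_const_mul,
      intervalIntegral.integral_const_mul, hflux R]
    ring
  -- nonnegativity of 𝓔K
  have hGnonneg : ∀ p : ℝ × ℝ, 0 ≤ Gfun K U a η p := by
    intro p
    have h1 : (0:ℝ) < unc a p := hap p
    have h2 : (0:ℝ) ≤ (unc a p)⁻¹ := (inv_pos.mpr h1).le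
    show (0:ℝ) ≤ (unc a p)⁻¹ * P1 (unc U) p ^ 2 + unc a p * P2 (unc U) p ^ 2
      + K ^ 2 / 4 * ((p.1 ^ 4)⁻¹ * ((unc a p)⁻¹ * Real.exp (2 * unc η p)))
    have t1 : (0:ℝ) ≤ (unc a p)⁻¹ * P1 (unc U) p ^ 2 := mul_nonneg h2 (sq_nonneg _)
    have t2 : (0:ℝ) ≤ unc a p * P2 (unc U) p ^ 2 := mul_nonneg h1.le (sq_nonneg _)
    have t3 : (0:ℝ) ≤ K ^ 2 / 4 * ((p.1 ^ 4)⁻¹ * ((unc a p)⁻¹ * Real.exp (2 * unc η p))) := by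
      apply mul_nonneg (by positivity)
      apply mul_nonneg (by positivity)
      exact mul_nonneg h2 (Real.exp_pos _).le
    linarith
  have h𝓔nonneg : ∀ r : ℝ, 0 ≤ 𝓔K r := fun r => by
    rw [h𝓔G]
    exact intervalIntegral.integral_nonneg h2pi (fun t _ => hGnonneg (r, t))
  refine ⟨part1, ?_, ?_⟩
  -- Part 2
  · apply antitoneOn_of_deriv_nonpos (convex_Ici R₀)
    · intro r hr
      exact (hder r (lt_of_lt_of_le hR₀ hr)).continuousAt.continuousWithinAt
    · intro r hr
      rw [interior_Ici] at hr
      exact (hder r (lt_trans hR₀ hr)).differentiableAt.differentiableWithinAt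
    · intro r hr
      rw [interior_Ici] at hr
      have hrm : r ∈ Set.Ici R₀ := Set.mem_Ici.mpr (le_of_lt hr)
      have hrpos : 0 < r := lt_trans hR₀ hr
      rw [part1 r hrm]
      have hI1 : 0 ≤ ∫ θ in (0:ℝ)..(2 * π), (a r θ)⁻¹ * Real.exp (2 * η r θ) :=
        intervalIntegral.integral_nonneg h2pi
          (fun t _ => mul_nonneg (inv_pos.mpr (hapos r t)).le (Real.exp_pos _).le)
      have hI2 : 0 ≤ ∫ θ in (0:ℝ)..(2 * π), (a r θ)⁻¹ * (deriv (fun r' => U r' θ) r) ^ 2 :=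
        intervalIntegral.integral_nonneg h2pi
          (fun t _ => mul_nonneg (inv_pos.mpr (hapos r t)).le (sq_nonneg _))
      have hc1 : 0 ≤ K ^ 2 / r ^ 5 := by positivity
      have hc2 : 0 ≤ 2 / r := by positivity
      nlinarith [mul_nonneg hc1 hI1, mul_nonneg hc2 hI2]
  -- Part 3
  · intro R hRm
    have hI1cont : Continuous fun r =>
        ∫ θ' in (0:ℝ)..(2 * π), (a r θ')⁻¹ * Real.exp (2 * η r θ') := by
      have hΦ : Continuous fun p : ℝ × ℝ => (unc a p)⁻¹ * Real.exp (2 * unc η p) :=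
        (hac.continuous.inv₀ (fun p => ne_of_gt (hap p))).mul
          (Real.continuous_exp.comp (continuous_const.mul hηc.continuous))
      exact cont_param hΦ h2pi
    have hI2cont : Continuous fun r =>
        ∫ θ' in (0:ℝ)..(2 * π), (a r θ')⁻¹ * P1 (unc U) (r, θ') ^ 2 := by
      have hΦ : Continuous fun p : ℝ × ℝ => (unc a p)⁻¹ * P1 (unc U) p ^ 2 :=
        (hac.continuous.inv₀ (fun p => ne_of_gt (hap p))).mul
          ((P1_contDiff hUc).continuous.pow 2)
      exact cont_param hΦ h2pi
    have hI1'cont : Continuous fun r =>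
        ∫ θ' in (0:ℝ)..(2 * π), Real.exp (2 * η r θ') * (a r θ')⁻¹ := by
      have hΦ : Continuous fun p : ℝ × ℝ => Real.exp (2 * unc η p) * (unc a p)⁻¹ :=
        (Real.continuous_exp.comp (continuous_const.mul hηc.continuous)).mul
          (hac.continuous.inv₀ (fun p => ne_of_gt (hap p)))
      exact cont_param hΦ h2pi
    have hψR : ∀ r ∈ Set.Ici R₀, HasDerivAt 𝓔K
        (-(K ^ 2 / r ^ 5) * (∫ θ' in (0:ℝ)..(2 * π), (a r θ')⁻¹ * Real.exp (2 * η r θ'))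
          - 2 / r * (∫ θ' in (0:ℝ)..(2 * π), (a r θ')⁻¹ * P1 (unc U) (r, θ') ^ 2)) r := by
      intro r hr
      have hrpos : 0 < r := lt_of_lt_of_le hR₀ hr
      have h := (hder r hrpos).differentiableAt.hasDerivAt
      rw [part1 r hr] at h
      simp only [cV] at h
      exact h
    have hψconton : ContinuousOn (fun r : ℝ =>
        -(K ^ 2 / r ^ 5) * (∫ θ' in (0:ℝ)..(2 * π), (a r θ')⁻¹ * Real.exp (2 * η r θ'))
          - 2 / r * (∫ θ' in (0:ℝ)..(2 * π), (a r θ')⁻¹ * P1 (unc U) (r, θ') ^ 2))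
        (Set.Ici R₀) := by
      apply ContinuousOn.sub
      · exact (ContinuousOn.div continuousOn_const (by fun_prop)
          (fun r hr => pow_ne_zero 5 (ne_of_gt (lt_of_lt_of_le hR₀ hr)))).neg.mul
          hI1cont.continuousOn
      · exact (ContinuousOn.div continuousOn_const (by fun_prop)
          (fun r hr => ne_of_gt (lt_of_lt_of_le hR₀ hr))).mul hI2cont.continuousOn
    have hsub : Set.uIcc R₀ R ⊆ Set.Ici R₀ := by
      rw [Set.uIcc_of_le hRm]
      exact fun r hr => hr.1
    have hFTC : (∫ r in R₀..R,
        (-(K ^ 2 / r ^ 5) * (∫ θ' in (0:ℝ)..(2 * π), (a r θ')⁻¹ * Real.exp (2 * η r θ'))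
          - 2 / r * (∫ θ' in (0:ℝ)..(2 * π), (a r θ')⁻¹ * P1 (unc U) (r, θ') ^ 2)))
        = 𝓔K R - 𝓔K R₀ :=
      intervalIntegral.integral_eq_sub_of_hasDerivAt (fun r hr => hψR r (hsub hr))
        ((hψconton.mono hsub).intervalIntegrable)
    have hgle : ∀ r ∈ Set.Icc R₀ R,
        K ^ 2 / r ^ 5 * (∫ θ in (0:ℝ)..(2 * π), Real.exp (2 * η r θ) * (a r θ)⁻¹)
          ≤ -(-(K ^ 2 / r ^ 5) * (∫ θ' in (0:ℝ)..(2 * π), (a r θ')⁻¹ * Real.exp (2 * η r θ'))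
              - 2 / r * (∫ θ' in (0:ℝ)..(2 * π), (a r θ')⁻¹ * P1 (unc U) (r, θ') ^ 2)) := by
      intro r hr
      have hrpos : 0 < r := lt_of_lt_of_le hR₀ hr.1
      have hflip : (∫ θ in (0:ℝ)..(2 * π), Real.exp (2 * η r θ) * (a r θ)⁻¹)
          = ∫ θ in (0:ℝ)..(2 * π), (a r θ)⁻¹ * Real.exp (2 * η r θ) :=
        intervalIntegral.integral_congr (fun t _ => mul_comm _ _)
      have hI2 : 0 ≤ ∫ θ in (0:ℝ)..(2 * π), (a r θ)⁻¹ * P1 (unc U) (r, θ) ^ 2 :=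
        intervalIntegral.integral_nonneg h2pi
          (fun t _ => mul_nonneg (inv_pos.mpr (hapos r t)).le (sq_nonneg _))
      have h2r : (0:ℝ) ≤ 2 / r := by positivity
      rw [hflip]
      nlinarith [mul_nonneg h2r hI2]
    have hgcont : ContinuousOn (fun r : ℝ =>
        K ^ 2 / r ^ 5 * (∫ θ in (0:ℝ)..(2 * π), Real.exp (2 * η r θ) * (a r θ)⁻¹))
        (Set.Ici R₀) :=
      (ContinuousOn.div continuousOn_const (by fun_prop)
        (fun r hr => pow_ne_zero 5 (ne_of_gt (lt_of_lt_of_le hR₀ hr)))).mul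
        hI1'cont.continuousOn
    have hmono := intervalIntegral.integral_mono_on (μ := volume) hRm
      ((hgcont.mono hsub).intervalIntegrable)
      (((hψconton.mono hsub).neg).intervalIntegrable) hgle
    simp only [Pi.neg_apply] at hmono
    rw [intervalIntegral.integral_neg, hFTC] at hmono
    have := h𝓔nonneg R
    linarith
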